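/- Let X be an N×N real symmetric positive definite matrix. For each i, let u_i : ℝ → ℝ be differentiable with u_i(0) = 0 and 0 < u_i'(v) < k_i for all v, where the diagonal matrix K = diag(k_1,…,k_N) satisfies 0 ≺ K ≺ 2X^{-1}. Then v = 0 is an equilibrium of the discrete-time system v_{t} = v_{t-1} - X·u(v_{t-1}) (where u acts componentwise), and the Jacobian of the update map at any point v, namely I - X·diag(u_1'(v_1),…,u_N'(v_N)), has spectral radius strictly less than 1. -/

import Mathlib

open Matrix ComplexOrder

lemma posDef_map_ofReal {n : ℕ} {A : Matrix (Fin n) (Fin n) ℝ} (hA : A.PosDef) :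
    (A.map Complex.ofReal).PosDef := by
  have hco : Complex.ofReal = ⇑Complex.ofRealHom := rfl
  obtain ⟨B, hB⟩ : ∃ B : Matrix (Fin n) (Fin n) ℝ, A = Bᴴ * B := by
    open scoped MatrixOrder in
    obtain ⟨B, hB⟩ := CStarAlgebra.nonneg_iff_eq_star_mul_self.mp hA.posSemidef.nonneg
    exact ⟨B, hB⟩
  have hsemi : (A.map Complex.ofReal).PosSemidef := by
    suffices hBB : A.map Complex.ofReal = (B.map Complex.ofReal)ᴴ * B.map Complex.ofReal by
      rw [hBB]; exact posSemidef_conjTranspose_mul_self _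
    have h1 : (B.map Complex.ofReal)ᴴ = Bᴴ.map Complex.ofReal := by
      ext i j; simp [conjTranspose_apply, Complex.conj_ofReal]
    rw [h1, hco, ← Matrix.map_mul, ← hB]
  have hdet : (A.map Complex.ofReal).det = Complex.ofReal A.det := by
    rw [hco, ← RingHom.mapMatrix_apply, ← RingHom.map_det]
  have hunit : IsUnit (A.map Complex.ofReal) := by
    rw [Matrix.isUnit_iff_isUnit_det, hdet]
    exact isUnit_iff_ne_zero.2 (by simpa using hA.det_pos.ne')
  refine PosDef.of_dotProduct_mulVec_pos hsemi.isHermitian fun x hx => ?_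
  refine lt_of_le_of_ne (hsemi.dotProduct_mulVec_nonneg x) (Ne.symm fun h0 => hx ?_)
  have h1 := (hsemi.dotProduct_mulVec_zero_iff x).mp h0
  have hinj := Matrix.mulVec_injective_iff_isUnit.mpr hunit
  have h2 : (A.map Complex.ofReal) *ᵥ x = (A.map Complex.ofReal) *ᵥ 0 := by simpa using h1
  exact hinj h2

theorem voltage_dynamics_stable {N : ℕ} (X : Matrix (Fin N) (Fin N) ℝ)
    (hX : X.PosDef) (u : Fin N → ℝ → ℝ) (k : Fin N → ℝ)
    (hdiff : ∀ i, Differentiable ℝ (u i))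
    (hu0 : ∀ i, u i 0 = 0)
    (hderiv : ∀ i v, 0 < deriv (u i) v ∧ deriv (u i) v < k i)
    (hk : ∀ i, 0 < k i)
    (hK : ((2 : ℝ) • X⁻¹ - Matrix.diagonal k).PosDef) :
    (fun v : Fin N → ℝ => v - X.mulVec (fun i => u i (v i))) 0 = 0 ∧
    ∀ v : Fin N → ℝ, ∀ lam : ℂ,
      lam ∈ spectrum ℂ (((1 : Matrix (Fin N) (Fin N) ℝ)
          - X * Matrix.diagonal (fun i => deriv (u i) (v i))).map Complex.ofReal) →
      ‖lam‖ < 1 := by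
  constructor
  · have h0 : (fun i => u i ((0 : Fin N → ℝ) i)) = (0 : Fin N → ℝ) :=
      funext fun i => by simp [hu0]
    simp only [h0, mulVec_zero, sub_zero]
  intro v lam hlam
  set d : Fin N → ℝ := fun i => deriv (u i) (v i) with hd
  have hd0 : ∀ i, 0 < d i := fun i => (hderiv i (v i)).1
  have hdk : ∀ i, d i < k i := fun i => (hderiv i (v i)).2
  have hco : Complex.ofReal = ⇑Complex.ofRealHom := rfl
  set Xc := X.map Complex.ofReal with hXc
  set Dc := (Matrix.diagonal d).map Complex.ofReal with hDc
  -- decompose map of the Jacobian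
  have hMc : ((1 : Matrix (Fin N) (Fin N) ℝ) - X * Matrix.diagonal d).map Complex.ofReal
      = 1 - Xc * Dc := by
    rw [hXc, hDc, hco, ← RingHom.mapMatrix_apply, ← RingHom.mapMatrix_apply,
      ← RingHom.mapMatrix_apply, map_sub, _root_.map_one, _root_.map_mul]
  rw [hMc] at hlam
  -- eigenvector
  rw [← AlgEquiv.spectrum_eq (Matrix.toLinAlgEquiv' (R := ℂ)) (1 - Xc * Dc)] at hlam
  have heig := Module.End.HasEigenvalue.exists_hasEigenvector
    (Module.End.hasEigenvalue_iff_mem_spectrum.mpr hlam)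
  obtain ⟨x, hvec⟩ := heig
  have hx0 : x ≠ 0 := hvec.2
  have hxe : x - (Xc * Dc) *ᵥ x = lam • x := by
    simpa [Matrix.toLinAlgEquiv'_apply, Matrix.toLin'_apply] using hvec.apply_eq_smul
  set μ : ℂ := 1 - lam with hμdef
  have hkey : (Xc * Dc) *ᵥ x = μ • x := by
    have h2 := sub_eq_iff_eq_add.mp hxe
    have h3 : (Xc * Dc) *ᵥ x = x - lam • x := eq_sub_of_add_eq' h2.symm
    rw [h3, hμdef, sub_smul, one_smul]
  set y : Fin N → ℂ := Dc *ᵥ x with hy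
  have hyi : ∀ i, y i = (d i : ℂ) * x i := by
    intro i
    simp [hy, hDc, Matrix.diagonal_map (by simp : (Complex.ofReal 0) = 0),
      mulVec_diagonal]
  have hy0 : y ≠ 0 := by
    intro h
    apply hx0
    funext i
    have := congrFun h i
    rw [hyi i] at this
    simpa [Complex.ofReal_ne_zero.mpr (hd0 i).ne'] using this
  have hXy : Xc *ᵥ y = μ • x := by
    rw [hy, mulVec_mulVec, hkey]
  -- the quantity a = xᴴ D x is a positive real r
  set r : ℝ := ∑ i, d i * Complex.normSq (x i) with hr
  have hr0 : 0 < r := by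
    obtain ⟨i, hi⟩ := Function.ne_iff.mp hx0
    refine Finset.sum_pos' (fun j _ => mul_nonneg (hd0 j).le (Complex.normSq_nonneg _))
      ⟨i, Finset.mem_univ i, mul_pos (hd0 i) (by simpa [Complex.normSq_pos] using hi)⟩
  have ha : star x ⬝ᵥ y = (r : ℂ) := by
    rw [hr, dotProduct]
    push_cast
    refine Finset.sum_congr rfl fun i _ => ?_
    rw [hyi i, Pi.star_apply, Complex.star_def, Complex.normSq_eq_conj_mul_self]
    ring
  have hay : star y ⬝ᵥ x = (r : ℂ) := by
    rw [← ha, dotProduct, dotProduct]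
    refine Finset.sum_congr rfl fun i _ => ?_
    simp only [hyi i, Pi.star_apply, star_mul', Complex.star_def, Complex.conj_ofReal]
    ring
  -- μ is a positive real
  have hXcpd : Xc.PosDef := posDef_map_ofReal hX
  have hq1 : 0 < star y ⬝ᵥ Xc *ᵥ y := hXcpd.dotProduct_mulVec_pos hy0
  have hq1' : star y ⬝ᵥ Xc *ᵥ y = μ * (r : ℂ) := by
    rw [hXy, dotProduct_smul, hay, smul_eq_mul]
  rw [hq1'] at hq1
  rw [Complex.lt_def] at hq1
  simp only [Complex.zero_re, Complex.zero_im, Complex.mul_re, Complex.mul_im,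
    Complex.ofReal_re, Complex.ofReal_im, mul_zero, zero_mul, sub_zero, add_zero,
    zero_add] at hq1
  obtain ⟨hμre, hμim⟩ := hq1
  have hm0 : 0 < μ.re := by nlinarith
  have him : μ.im = 0 := by
    rcases mul_eq_zero.mp hμim.symm with h | h
    · exact h
    · exact absurd h hr0.ne'
  set m : ℝ := μ.re with hmdef
  have hμm : μ = (m : ℂ) := Complex.ext rfl (by simp [him])
  have hmne : (m : ℂ) ≠ 0 := Complex.ofReal_ne_zero.mpr hm0.ne'
  -- upper bound via 2X⁻¹ - D ≻ 0
  have hA2 : ((2 : ℝ) • X⁻¹ - Matrix.diagonal d).PosDef := by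
    have hdd : (Matrix.diagonal (fun i => k i - d i)).PosDef :=
      Matrix.PosDef.diagonal fun i => sub_pos.mpr (hdk i)
    have he : (2 : ℝ) • X⁻¹ - Matrix.diagonal d
        = ((2 : ℝ) • X⁻¹ - Matrix.diagonal k) + Matrix.diagonal (fun i => k i - d i) := by
      ext i j
      rcases eq_or_ne i j with h | h
      · subst h
        simp [Matrix.sub_apply, Matrix.add_apply, Matrix.diagonal_apply_eq]
        try ring
      · simp [Matrix.sub_apply, Matrix.add_apply, Matrix.diagonal_apply_ne _ h]
    rw [he]
    exact hK.add_posSemidef hdd.posSemidef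
  have hA2c := posDef_map_ofReal hA2
  have hq2 := hA2c.dotProduct_mulVec_pos hx0
  have hXdet : IsUnit X.det := isUnit_iff_ne_zero.2 hX.det_pos.ne'
  have hXinv : Xc⁻¹ = X⁻¹.map Complex.ofReal := by
    apply inv_eq_right_inv
    rw [hXc, hco, ← RingHom.mapMatrix_apply, ← RingHom.mapMatrix_apply, ← _root_.map_mul,
      X.mul_nonsing_inv hXdet, _root_.map_one]
  have hA2map : ((2 : ℝ) • X⁻¹ - Matrix.diagonal d).map Complex.ofReal
      = (2 : ℂ) • Xc⁻¹ - Dc := by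
    rw [hXinv, hDc]
    ext i j
    simp only [Matrix.map_apply, Matrix.sub_apply, Matrix.smul_apply, smul_eq_mul]
    push_cast
    ring
  have hXcdet : IsUnit Xc.det := by
    rw [hXc, hco, ← RingHom.mapMatrix_apply, ← RingHom.map_det]
    exact isUnit_iff_ne_zero.2 (by simpa using hX.det_pos.ne')
  have hyw : y = μ • (Xc⁻¹ *ᵥ x) := by
    have h1 := congrArg (fun z => Xc⁻¹ *ᵥ z) hXy
    simp only [mulVec_mulVec, Xc.nonsing_inv_mul hXcdet, one_mulVec, mulVec_smul] at h1
    exact h1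
  have hs : star x ⬝ᵥ (Xc⁻¹ *ᵥ x) = ((r / m : ℝ) : ℂ) := by
    have h1 : (r : ℂ) = μ * (star x ⬝ᵥ (Xc⁻¹ *ᵥ x)) := by
      rw [← ha, hyw, dotProduct_smul, smul_eq_mul]
    rw [hμm] at h1
    push_cast
    rw [eq_div_iff hmne, h1]
    ring
  rw [hA2map] at hq2
  have hq2' : star x ⬝ᵥ (((2 : ℂ) • Xc⁻¹ - Dc) *ᵥ x) = ((2 * (r / m) - r : ℝ) : ℂ) := by
    rw [sub_mulVec, dotProduct_sub, smul_mulVec, dotProduct_smul, hs, ← hy, ha]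
    push_cast
    simp only [smul_eq_mul]
    try ring
  rw [hq2'] at hq2
  have hq2r : 0 < 2 * (r / m) - r := Complex.zero_lt_real.mp hq2
  have hm2 : m < 2 := by
    have h3 : r < 2 * (r / m) := by linarith
    have h4 := mul_lt_mul_of_pos_right h3 hm0
    have h5 : 2 * (r / m) * m = 2 * r := by field_simp
    rw [h5] at h4
    nlinarith
  have hlam' : lam = ((1 - m : ℝ) : ℂ) := by
    have h1 : lam = 1 - μ := by rw [hμdef]; ring
    rw [h1, hμm]
    push_cast
    ring
  rw [hlam', Complex.norm_real, Real.norm_eq_abs, abs_lt]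
  constructor <;> linarith
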